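/- Let F be a free semigroup on a finite nonempty alphabet A, let X be an F-act, and let φ: F[X] → F[X] be a surjective semigroup endomorphism. Then the restriction of φ to F is an automorphism of F, and φ(X) = X. -/

import Mathlib

/-- The multiplication of the semigroup `S[X]` built from a semigroup `S` and a right
`S`-act `X`: the carrier is `S ⊕ X`, the multiplication extends that of `S` by
`s · x = x`, `x · s = x ⬝ s` (the act value) and `x · y = y`. -/
def actMul {S X : Type*} [Mul S] (act : X → S → X) : S ⊕ X → S ⊕ X → S ⊕ X
  | Sum.inl s, Sum.inl t => Sum.inl (s * t)
  | Sum.inl _, Sum.inr x => Sum.inr x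
  | Sum.inr x, Sum.inl s => Sum.inr (act x s)
  | Sum.inr _, Sum.inr y => Sum.inr y

/-- `actMul` is associative, so `S[X]` is indeed a semigroup. -/
def actSemigroup {S X : Type*} [Semigroup S] (act : X → S → X)
    (hact : ∀ (x : X) (s t : S), act x (s * t) = act (act x s) t) :
    Semigroup (S ⊕ X) where
  mul := actMul act
  mul_assoc u v w := by
    show actMul act (actMul act u v) w = actMul act u (actMul act v w)
    rcases u with s | x <;> rcases v with t | y <;> rcases w with r | z <;>
      simp [actMul, mul_assoc, hact]

/-- If `F` is a free semigroup of finite rank and `φ` is a surjective endomorphism of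
`F[X]`, then `φ` restricts to an automorphism of `F` and maps `X` onto `X`. -/
theorem stmt_11 {A : Type} [Finite A] [Nonempty A] (X : Type)
    (act : X → FreeSemigroup A → X)
    (hact : ∀ (x : X) (s t : FreeSemigroup A), act x (s * t) = act (act x s) t)
    (φ : FreeSemigroup A ⊕ X → FreeSemigroup A ⊕ X)
    (hhom : ∀ u v, φ (actMul act u v) = actMul act (φ u) (φ v))
    (hsurj : Function.Surjective φ) :
    (∃ σ : FreeSemigroup A → FreeSemigroup A,
      (∀ s, φ (Sum.inl s) = Sum.inl (σ s)) ∧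
      (∀ s t, σ (s * t) = σ s * σ t) ∧ Function.Bijective σ) ∧
    φ '' (Set.range Sum.inr) = Set.range Sum.inr := by
  -- self-multiplication never fixes an element of a free semigroup
  have hne : ∀ s : FreeSemigroup A, s * s ≠ s := by
    intro s h
    have h1 := congrArg FreeSemigroup.length h
    rw [FreeSemigroup.length_mul] at h1
    have h2 : s.length = s.tail.length + 1 := rfl
    omega
  -- φ maps X into X
  have hXX : ∀ x : X, ∃ y, φ (Sum.inr x) = Sum.inr y := by
    intro x
    have h := hhom (Sum.inr x) (Sum.inr x)
    have h0 : actMul act (Sum.inr x : FreeSemigroup A ⊕ X) (Sum.inr x) = Sum.inr x := rfl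
    rw [h0] at h
    rcases hx : φ (Sum.inr x) with s | y
    · rw [hx] at h
      simp only [actMul] at h
      exact absurd (Sum.inl.inj h).symm (hne s)
    · exact ⟨y, rfl⟩
  -- every letter of A is the image of a letter
  have hletter : ∀ a : A, ∃ b : A,
      φ (Sum.inl (FreeSemigroup.of b)) = Sum.inl (FreeSemigroup.of a) := by
    intro a
    obtain ⟨u, hu⟩ := hsurj (Sum.inl (FreeSemigroup.of a))
    rcases u with s | x
    · clear hact hsurj
      induction s using FreeSemigroup.recOnMul with
      | ih1 b => exact ⟨b, hu⟩
      | ih2 c y ihx ihy =>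
        exfalso
        have h := hhom (Sum.inl (FreeSemigroup.of c)) (Sum.inl y)
        have hxy : actMul act (Sum.inl (FreeSemigroup.of c) : FreeSemigroup A ⊕ X)
            (Sum.inl y) = Sum.inl (FreeSemigroup.of c * y) := rfl
        rw [hxy, hu] at h
        rcases hx : φ (Sum.inl (FreeSemigroup.of c)) with s | z <;>
            rcases hy : φ (Sum.inl y) with t | w <;>
            rw [hx, hy] at h <;> simp only [actMul] at h <;>
            try exact Sum.inl_ne_inr h
        have h1 := congrArg FreeSemigroup.length (Sum.inl.inj h)
        rw [FreeSemigroup.length_mul, FreeSemigroup.length_of] at h1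
        have h2 : s.length = s.tail.length + 1 := rfl
        have h3 : t.length = t.tail.length + 1 := rfl
        omega
    · obtain ⟨y, hy⟩ := hXX x
      rw [hu] at hy
      exact absurd hy (by simp)
  -- choose preimage letters
  choose k hk using hletter
  have hkinj : Function.Injective k := by
    intro a a' h
    have h1 := (hk a).symm.trans (h ▸ hk a')
    simpa [FreeSemigroup.of] using h1
  have hkbij : Function.Bijective k :=
    ⟨hkinj, Finite.surjective_of_injective hkinj⟩
  let e : A ≃ A := Equiv.ofBijective k hkbij
  -- action of φ on letters
  have hofe : ∀ b : A, φ (Sum.inl (FreeSemigroup.of b))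
      = Sum.inl (FreeSemigroup.of (e.symm b)) := by
    intro b
    calc φ (Sum.inl (FreeSemigroup.of b))
        = φ (Sum.inl (FreeSemigroup.of (k (e.symm b)))) := by
          rw [show k (e.symm b) = b from e.apply_symm_apply b]
      _ = Sum.inl (FreeSemigroup.of (e.symm b)) := hk (e.symm b)
  -- the restriction σ
  set σ : FreeSemigroup A → FreeSemigroup A := ⇑(FreeSemigroup.map (e.symm : A → A)) with hσ
  have hφσ : ∀ s, φ (Sum.inl s) = Sum.inl (σ s) := by
    intro s
    induction s using FreeSemigroup.recOnMul with
    | ih1 b => simpa [hσ] using hofe b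
    | ih2 c y ihx ihy =>
      have h := hhom (Sum.inl (FreeSemigroup.of c)) (Sum.inl y)
      have hxy : actMul act (Sum.inl (FreeSemigroup.of c) : FreeSemigroup A ⊕ X)
          (Sum.inl y) = Sum.inl (FreeSemigroup.of c * y) := rfl
      rw [hxy, ihx, ihy] at h
      rw [h]
      simp [actMul, hσ]
  have hmapmap : ∀ (f g : A → A) (s : FreeSemigroup A),
      FreeSemigroup.map f (FreeSemigroup.map g s) = FreeSemigroup.map (f ∘ g) s := by
    intro f g s
    induction s using FreeSemigroup.recOnMul with
    | ih1 b => simp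
    | ih2 c y ihx ihy => simp [map_mul, ihx, ihy]
  have hmapid : ∀ s : FreeSemigroup A, FreeSemigroup.map (id : A → A) s = s := by
    intro s
    induction s using FreeSemigroup.recOnMul with
    | ih1 b => simp
    | ih2 c y ihx ihy => simp [map_mul, ihx, ihy]
  have hσbij : Function.Bijective σ := by
    have hli : Function.LeftInverse (FreeSemigroup.map (e : A → A)) σ := by
      intro s; rw [hσ, hmapmap]; simpa using hmapid s
    have hri : Function.RightInverse (FreeSemigroup.map (e : A → A)) σ := by
      intro s; rw [hσ, hmapmap]; simpa using hmapid s
    exact ⟨hli.injective, hri.surjective⟩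
  constructor
  · exact ⟨σ, hφσ, fun s t => map_mul _ s t, hσbij⟩
  · apply Set.eq_of_subset_of_subset
    · rintro v ⟨u, ⟨x, rfl⟩, rfl⟩
      obtain ⟨y, hy⟩ := hXX x
      exact ⟨y, hy.symm⟩
    · rintro v ⟨x, rfl⟩
      obtain ⟨u, hu⟩ := hsurj (Sum.inr x)
      rcases u with s | z
      · rw [hφσ s] at hu; exact absurd hu (by simp)
      · exact ⟨Sum.inr z, ⟨z, rfl⟩, hu⟩
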